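/- A divisor D is winnable (linearly equivalent to an effective divisor) if and only if the unique q-reduced divisor D' linearly equivalent to D satisfies D'(q) ≥ 0. -/

import Mathlib

open Finset

/-- A finite loopless undirected multigraph on vertex set `V`, given by symmetric
edge multiplicities. -/
structure Multigraph (V : Type) where
  E : V → V → ℕ
  symm : ∀ u v, E u v = E v u
  loopless : ∀ v, E v v = 0

variable {V : Type} [Fintype V] [DecidableEq V]

/-- The valence (degree) of a vertex: number of incident edges. -/
def Multigraph.val (G : Multigraph V) (v : V) : ℕ := ∑ w, G.E v w

/-- Connectivity of a multigraph. -/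
def Multigraph.Connected (G : Multigraph V) : Prop :=
  ∀ u v : V, Relation.ReflTransGen (fun a b => 0 < G.E a b) u v

/-- Degree of a divisor. -/
def divDeg (D : V → ℤ) : ℤ := ∑ v, D v

/-- The graph Laplacian applied to a firing script. -/
def lap (G : Multigraph V) (σ : V → ℤ) : V → ℤ :=
  fun v => ∑ w, (G.E v w : ℤ) * (σ v - σ w)

/-- Lending move at `v`. -/
def lend (G : Multigraph V) (D : V → ℤ) (v : V) : V → ℤ :=
  fun w => if w = v then D v - (G.val v : ℤ) else D w + (G.E v w : ℤ)

/-- Borrowing move at `v`. -/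
def borrow (G : Multigraph V) (D : V → ℤ) (v : V) : V → ℤ :=
  fun w => if w = v then D v + (G.val v : ℤ) else D w - (G.E v w : ℤ)

/-- Linear equivalence: generated by lending moves. -/
def LinEquiv (G : Multigraph V) : (V → ℤ) → (V → ℤ) → Prop :=
  Relation.ReflTransGen (fun D D' => ∃ v, D' = lend G D v)

/-- Number of edges from `v` to vertices outside `S`. -/
def outdegS (G : Multigraph V) (S : Finset V) (v : V) : ℕ := ∑ w ∈ Sᶜ, G.E v w

/-- Fire all vertices of `S` simultaneously once. -/
def fireSet (G : Multigraph V) (D : V → ℤ) (S : Finset V) : V → ℤ :=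
  fun v => if v ∈ S then D v - (outdegS G S v : ℤ) else D v + ∑ w ∈ S, (G.E v w : ℤ)

/-- A divisor is `q`-reduced: nonnegative away from `q`, and no nonempty subset of
`V \ {q}` can be legally fired (every such `S` has a vertex with fewer chips than its
outdegree from `S`). -/
def QReduced (G : Multigraph V) (q : V) (D : V → ℤ) : Prop :=
  (∀ v, v ≠ q → 0 ≤ D v) ∧
  ∀ S : Finset V, S.Nonempty → (∀ v ∈ S, v ≠ q) → ∃ v ∈ S, D v < (outdegS G S v : ℤ)

/-- A divisor is effective if all its values are nonnegative. -/
def Effective (D : V → ℤ) : Prop := ∀ v, 0 ≤ D v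

/-- A divisor is winnable if it is linearly equivalent to an effective divisor. -/
def Winnable (G : Multigraph V) (D : V → ℤ) : Prop :=
  ∃ D' : V → ℤ, LinEquiv G D D' ∧ Effective D'

set_option linter.unusedSectionVars false

lemma lend_eq_sub_lap (G : Multigraph V) (D : V → ℤ) (v : V) :
    lend G D v = fun w => D w - lap G (fun u => if u = v then 1 else 0) w := by
  funext w
  simp only [lend, lap]
  by_cases h : w = v
  · subst h
    simp only [if_pos rfl, mul_sub, mul_one]
    rw [Finset.sum_sub_distrib]
    have : ∑ u, (G.E w u : ℤ) * (if u = w then 1 else 0) = (G.E w w : ℤ) := by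
      simp [mul_ite]
    rw [this]
    simp [G.loopless, Multigraph.val]
  · rw [if_neg h, if_neg h]
    have : ∀ u, (G.E w u : ℤ) * ((0:ℤ) - (if u = v then 1 else 0))
        = -((G.E w u : ℤ) * (if u = v then 1 else 0)) := by
      intro u; ring
    rw [Finset.sum_congr rfl (fun u _ => this u)]
    simp [mul_ite, G.symm w v]

lemma linEquiv_exists_lap (G : Multigraph V) (D X : V → ℤ) (h : LinEquiv G D X) :
    ∃ σ : V → ℤ, ∀ v, X v = D v - lap G σ v := by
  induction h with
  | refl => exact ⟨0, fun v => by simp [lap]⟩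
  | tail _ hstep ih =>
    obtain ⟨σ, hσ⟩ := ih
    obtain ⟨v, rfl⟩ := hstep
    refine ⟨σ + fun u => if u = v then 1 else 0, fun w => ?_⟩
    rw [lend_eq_sub_lap]
    show _ - _ = _
    rw [hσ w]
    simp only [lap, Pi.add_apply]
    rw [sub_sub, ← Finset.sum_add_distrib]
    congr 1
    apply Finset.sum_congr rfl
    intro u _
    ring

lemma lap_sub_apply (G : Multigraph V) (σ1 σ2 : V → ℤ) (v : V) :
    lap G (fun u => σ2 u - σ1 u) v = lap G σ2 v - lap G σ1 v := by
  simp only [lap]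
  rw [← Finset.sum_sub_distrib]
  apply Finset.sum_congr rfl
  intro u _
  ring

theorem main_fwd (G : Multigraph V) (q : V)
    (D D' : V → ℤ) (hequiv : LinEquiv G D D')
    (hred : (∀ v, v ≠ q → 0 ≤ D' v) ∧
      ∀ S : Finset V, S.Nonempty → (∀ v ∈ S, v ≠ q) →
        ∃ v ∈ S, D' v < (∑ w ∈ Sᶜ, G.E v w : ℤ))
    (W : V → ℤ) (hW : LinEquiv G D W) (hWeff : ∀ v, 0 ≤ W v) :
    0 ≤ D' q := by
  obtain ⟨σ1, h1⟩ := linEquiv_exists_lap G D D' hequiv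
  obtain ⟨σ2, h2⟩ := linEquiv_exists_lap G D W hW
  set τ : V → ℤ := fun v => σ2 v - σ1 v with hτ
  have hWD' : ∀ v, W v = D' v - lap G τ v := by
    intro v
    rw [h2 v, h1 v, hτ, lap_sub_apply]
    ring
  set m : ℤ := Finset.univ.sup' ⟨q, Finset.mem_univ q⟩ τ with hm
  have hle : ∀ v, τ v ≤ m := fun v => Finset.le_sup' τ (Finset.mem_univ v)
  obtain ⟨u, -, hu⟩ := Finset.exists_mem_eq_sup' ⟨q, Finset.mem_univ q⟩ τ
  by_cases hq : τ q = m
  · have hsum : 0 ≤ lap G τ q := by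
      apply Finset.sum_nonneg
      intro w _
      apply mul_nonneg (Int.natCast_nonneg _)
      have := hle w
      omega
    have := hWD' q
    have := hWeff q
    linarith
  · set A : Finset V := Finset.univ.filter (fun v => τ v = m) with hA
    have hAne : A.Nonempty := ⟨u, by simp [hA, ← hu]; exact hm.symm⟩
    have hAq : ∀ v ∈ A, v ≠ q := by
      intro v hv hvq
      subst hvq
      exact hq (Finset.mem_filter.mp hv).2
    obtain ⟨v, hvA, hvlt⟩ := hred.2 A hAne hAq
    have hvm : τ v = m := (Finset.mem_filter.mp hvA).2
    have key : (∑ w ∈ Aᶜ, (G.E v w : ℤ)) ≤ lap G τ v := by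
      unfold lap
      rw [← Finset.sum_add_sum_compl A (fun w => (G.E v w : ℤ) * (τ v - τ w))]
      have h0 : ∑ w ∈ A, (G.E v w : ℤ) * (τ v - τ w) = 0 := by
        apply Finset.sum_eq_zero
        intro w hw
        have : τ w = m := (Finset.mem_filter.mp hw).2
        rw [hvm, this]
        ring
      rw [h0, zero_add]
      apply Finset.sum_le_sum
      intro w hw
      have hw1 : τ w ≠ m := by
        intro h
        exact (Finset.mem_compl.mp hw) (Finset.mem_filter.mpr ⟨Finset.mem_univ w, h⟩)
      have : τ v - τ w ≥ 1 := by have := hle w; omega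
      nlinarith [Int.natCast_nonneg (G.E v w)]
    have := hWD' v
    have := hWeff v
    linarith

/-- `D` is winnable iff the `q`-reduced divisor `D'` linearly equivalent to `D`
satisfies `D'(q) ≥ 0`. -/
theorem winnable_iff_qreduced_nonneg (G : Multigraph V) (hG : G.Connected) (q : V)
    (D D' : V → ℤ) (hequiv : LinEquiv G D D') (hred : QReduced G q D') :
    Winnable G D ↔ 0 ≤ D' q := by
  constructor
  · rintro ⟨W, hW, hWeff⟩
    refine main_fwd G q D D' hequiv ⟨hred.1, fun S h1 h2 => ?_⟩ W hW hWeff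
    obtain ⟨v, hv, hlt⟩ := hred.2 S h1 h2
    exact ⟨v, hv, by simpa [outdegS, Nat.cast_sum] using hlt⟩
  · intro h
    refine ⟨D', hequiv, fun v => ?_⟩
    by_cases hv : v = q
    · subst hv; exact h
    · exact hred.1 v hv
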